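/- arXiv:2604.08724 — 3 statements merged into one kernel-verified Lean document; each statement's English description precedes it below -/
import Mathlib

section
/- For every subset A of a group G: cov_G(AA⁻¹) ≤ |G:A|₋ ≤ |G:A|₊, and |G:A|₊ = pack_G(A), where |G:A|₋ and |G:A|₊ are the left lower and left upper subindices of A in G. -/
open Pointwise

/-- The product `A * B` is direct. -/
def IsDirectProd {G : Type*} [Group G] (A B : Set G) : Prop :=
  ∀ a₁ ∈ A, ∀ b₁ ∈ B, ∀ a₂ ∈ A, ∀ b₂ ∈ B, a₁ * b₁ = a₂ * b₂ → a₁ = a₂ ∧ b₁ = b₂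

/-- `B` is a left subfactor of `G` relative to `A`: `B` is inclusion-maximal
among subsets with `B * A` direct. -/
def IsLeftSubfactor {G : Type*} [Group G] (A B : Set G) : Prop :=
  IsDirectProd B A ∧ ∀ B' : Set G, B ⊆ B' → IsDirectProd B' A → B' = B

/-- The left upper subindex `|G:A|₊`. -/
noncomputable def lUpperIndex {G : Type*} [Group G] (A : Set G) : Cardinal :=
  sSup {c | ∃ B : Set G, IsLeftSubfactor A B ∧ c = Cardinal.mk ↥B}

/-- The left lower subindex `|G:A|₋`. -/
noncomputable def lLowerIndex {G : Type*} [Group G] (A : Set G) : Cardinal :=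
  sInf {c | ∃ B : Set G, IsLeftSubfactor A B ∧ c = Cardinal.mk ↥B}

/-- The (left) packing number of `A` in `G`: the supremum of cardinalities of sets of
pairwise-disjoint left translates of `A`. -/
noncomputable def packNumber {G : Type*} [Group G] (A : Set G) : Cardinal :=
  sSup {c | ∃ S : Set G,
    (∀ x ∈ S, ∀ y ∈ S, x ≠ y → (x • A) ∩ (y • A) = ∅) ∧ c = Cardinal.mk ↥S}

/-- The (left) covering number of `D` in `G`. -/
noncomputable def covNumber {G : Type*} [Group G] (D : Set G) : Cardinal :=
  sInf {c | ∃ X : Set G, X * D = Set.univ ∧ c = Cardinal.mk ↥X}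

lemma directProd_iff_disjoint {G : Type*} [Group G] (A B : Set G) :
    IsDirectProd B A ↔ ∀ x ∈ B, ∀ y ∈ B, x ≠ y → (x • A) ∩ (y • A) = ∅ := by
  constructor
  · intro h x hx y hy hxy
    ext g
    simp only [Set.mem_inter_iff, Set.mem_smul_set, Set.mem_empty_iff_false, iff_false, not_and]
    rintro ⟨a, ha, rfl⟩ ⟨b, hb, hba⟩
    exact hxy (h x hx a ha y hy b hb (by simpa [smul_eq_mul] using hba.symm)).1
  · intro h b₁ hb₁ a₁ ha₁ b₂ hb₂ a₂ ha₂ heq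
    by_cases hb : b₁ = b₂
    · subst hb; exact ⟨rfl, mul_left_cancel heq⟩
    · exfalso
      have hmem : b₁ * a₁ ∈ (b₁ • A) ∩ (b₂ • A) :=
        ⟨⟨a₁, ha₁, rfl⟩, ⟨a₂, ha₂, heq.symm⟩⟩
      simp [h b₁ hb₁ b₂ hb₂ hb] at hmem

lemma exists_subfactor_superset {G : Type*} [Group G] (A S : Set G)
    (hS : IsDirectProd S A) : ∃ B, S ⊆ B ∧ IsLeftSubfactor A B := by
  obtain ⟨B, hSB, hBmax⟩ :=
    zorn_subset_nonempty {B : Set G | IsDirectProd B A}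
      (fun c hc hchain _ => by
        refine ⟨⋃₀ c, ?_, fun s hs => Set.subset_sUnion_of_mem hs⟩
        intro b₁ hb₁ a₁ ha₁ b₂ hb₂ a₂ ha₂ heq
        obtain ⟨t₁, ht₁, hb₁t⟩ := hb₁
        obtain ⟨t₂, ht₂, hb₂t⟩ := hb₂
        rcases eq_or_ne t₁ t₂ with rfl | hne
        · exact hc ht₁ b₁ hb₁t a₁ ha₁ b₂ hb₂t a₂ ha₂ heq
        · rcases hchain ht₁ ht₂ hne with hsub | hsub
          · exact hc ht₂ b₁ (hsub hb₁t) a₁ ha₁ b₂ hb₂t a₂ ha₂ heq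
          · exact hc ht₁ b₁ hb₁t a₁ ha₁ b₂ (hsub hb₂t) a₂ ha₂ heq)
      S hS
  exact ⟨B, hSB, hBmax.1, fun B' hBB' hB' => subset_antisymm (hBmax.2 hB' hBB') hBB'⟩

theorem stmt5 {G : Type*} [Group G] (A : Set G) :
    covNumber (A * A⁻¹) ≤ lLowerIndex A ∧
    lLowerIndex A ≤ lUpperIndex A ∧
    lUpperIndex A = packNumber A := by
  set D : Set Cardinal := {c | ∃ B : Set G, IsLeftSubfactor A B ∧ c = Cardinal.mk ↥B} with hD
  set P : Set Cardinal := {c | ∃ S : Set G,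
    (∀ x ∈ S, ∀ y ∈ S, x ≠ y → (x • A) ∩ (y • A) = ∅) ∧ c = Cardinal.mk ↥S} with hP
  have hDne : D.Nonempty := by
    obtain ⟨B, _, hB⟩ := exists_subfactor_superset A ∅ (by intro b hb; exact absurd hb (by simp))
    exact ⟨_, B, hB, rfl⟩
  have hDbdd : BddAbove D := by
    refine ⟨Cardinal.mk G, fun c hc => ?_⟩
    obtain ⟨B, _, rfl⟩ := hc
    exact Cardinal.mk_set_le B
  have hPbdd : BddAbove P := by
    refine ⟨Cardinal.mk G, fun c hc => ?_⟩
    obtain ⟨S, _, rfl⟩ := hc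
    exact Cardinal.mk_set_le S
  refine ⟨?_, csInf_le_csSup hDne (OrderBot.bddBelow _) hDbdd, ?_⟩
  · -- covNumber ≤ lLowerIndex
    rcases A.eq_empty_or_nonempty with rfl | ⟨a, ha⟩
    · have : {c | ∃ X : Set G, X * ((∅ : Set G) * (∅ : Set G)⁻¹) = Set.univ ∧
          c = Cardinal.mk ↥X} = ∅ := by
        ext c
        simp only [Set.mem_setOf_eq, Set.mem_empty_iff_false, iff_false, not_exists]
        intro X ⟨hX, _⟩
        have : (1 : G) ∈ (Set.univ : Set G) := Set.mem_univ 1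
        rw [← hX] at this
        simp at this
      rw [covNumber, this, Cardinal.sInf_empty]
      exact zero_le ..
    · refine le_csInf hDne ?_
      rintro c ⟨B, hB, rfl⟩
      refine csInf_le (OrderBot.bddBelow _) ⟨B, ?_, rfl⟩
      -- B * (A * A⁻¹) = univ
      ext g
      simp only [Set.mem_univ, iff_true]
      by_contra hg
      have hgB : g ∉ B := by
        intro hgB
        exact hg ⟨g, hgB, a * a⁻¹, Set.mul_mem_mul ha (Set.inv_mem_inv.mpr ha), by simp⟩
      have hdir : IsDirectProd (insert g B) A := by
        rw [directProd_iff_disjoint]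
        have hBdis := (directProd_iff_disjoint A B).mp hB.1
        have key : ∀ y ∈ B, (g • A) ∩ (y • A) = ∅ := by
          intro y hy
          ext z
          simp only [Set.mem_inter_iff, Set.mem_smul_set, Set.mem_empty_iff_false, iff_false,
            not_and]
          rintro ⟨a₁, ha₁, rfl⟩ ⟨a₂, ha₂, hz⟩
          refine hg ⟨y, hy, a₂ * a₁⁻¹, Set.mul_mem_mul ha₂ (Set.inv_mem_inv.mpr ha₁), ?_⟩
          have hya : y * a₂ = g * a₁ := by simpa [smul_eq_mul] using hz
          show y * (a₂ * a₁⁻¹) = g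
          rw [← mul_assoc, hya, mul_inv_cancel_right]
        rintro x (rfl | hx) y (rfl | hy) hxy
        · exact absurd rfl hxy
        · exact key y hy
        · rw [Set.inter_comm]; exact key x hx
        · exact hBdis x hx y hy hxy
      have := hB.2 (insert g B) (Set.subset_insert g B) hdir
      exact hgB (this ▸ Set.mem_insert g B)
  · -- lUpperIndex = packNumber
    have hDP : D ⊆ P := by
      rintro c ⟨B, hB, rfl⟩
      exact ⟨B, (directProd_iff_disjoint A B).mp hB.1, rfl⟩
    refine le_antisymm (csSup_le_csSup hPbdd hDne hDP) ?_
    refine csSup_le (hDne.mono hDP) ?_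
    · rintro c ⟨S, hS, rfl⟩
      obtain ⟨B, hSB, hB⟩ := exists_subfactor_superset A S
        ((directProd_iff_disjoint A S).mpr hS)
      calc Cardinal.mk ↥S ≤ Cardinal.mk ↥B := Cardinal.mk_le_mk_of_subset hSB
        _ ≤ _ := le_csSup hDbdd ⟨B, hB, rfl⟩
end

section
/- Let G be an infinite group and A a nonempty subset of G. Then |A|·|B| = |G| for every right subfactor B of G relative to A and for every left subfactor B of G relative to A. Consequently |G| = |G:A|⁻·|A| = |G:A|⁺·|A| = |G:A|₋·|A| = |G:A|₊·|A| as cardinals. -/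
open Pointwise

/-- `B` is a right subfactor of `G` relative to `A`. -/
def IsRightSubfactor {G : Type*} [Group G] (A B : Set G) : Prop :=
  IsDirectProd A B ∧ ∀ B' : Set G, B ⊆ B' → IsDirectProd A B' → B' = B

/-- The right upper subindex `|G:A|⁺`. -/
noncomputable def rUpperIndex {G : Type*} [Group G] (A : Set G) : Cardinal :=
  sSup {c | ∃ B : Set G, IsRightSubfactor A B ∧ c = Cardinal.mk ↥B}

/-- The right lower subindex `|G:A|⁻`. -/
noncomputable def rLowerIndex {G : Type*} [Group G] (A : Set G) : Cardinal :=
  sInf {c | ∃ B : Set G, IsRightSubfactor A B ∧ c = Cardinal.mk ↥B}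

private lemma card_aux {κ μ lam : Cardinal} (hκ : κ ≠ 0) (hlam : Cardinal.aleph0 ≤ lam)
    (h1 : κ * μ ≤ lam) (h2 : lam ≤ κ * κ * μ) : κ * μ = lam := by
  have hμ : μ ≠ 0 := by
    rintro rfl
    rw [mul_zero, le_zero_iff] at h2
    exact Cardinal.aleph0_ne_zero (le_antisymm (h2 ▸ hlam) zero_le)
  have hinf : Cardinal.aleph0 ≤ κ * μ := by
    by_contra h
    push_neg at h
    rw [Cardinal.mul_lt_aleph0_iff] at h
    rcases h with h | h | ⟨h, h'⟩
    · exact hκ h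
    · exact hμ h
    · exact absurd (h2.trans_lt (Cardinal.mul_lt_aleph0 (Cardinal.mul_lt_aleph0 h h) h'))
        (not_lt.mpr hlam)
  have hle : κ ≤ κ * μ := by
    calc κ = κ * 1 := (mul_one κ).symm
    _ ≤ κ * μ := by gcongr; exact Cardinal.one_le_iff_ne_zero.mpr hμ
  have key : κ * μ * κ = κ * μ := Cardinal.mul_eq_left hinf hle hκ
  refine le_antisymm h1 ?_
  calc lam ≤ κ * κ * μ := h2
  _ = κ * μ * κ := by ring
  _ = κ * μ := key

private lemma exists_right_subfactor {G : Type*} [Group G] (A : Set G) :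
    ∃ B : Set G, IsRightSubfactor A B := by
  have hchains : ∀ c ⊆ {B : Set G | IsDirectProd A B}, IsChain (· ⊆ ·) c →
      ∃ ub ∈ {B : Set G | IsDirectProd A B}, ∀ s ∈ c, s ⊆ ub := by
    intro c hc hchain
    refine ⟨⋃₀ c, ?_, fun s hs => Set.subset_sUnion_of_mem hs⟩
    rintro a₁ ha₁ b₁ ⟨s₁, hs₁, hb₁⟩ a₂ ha₂ b₂ ⟨s₂, hs₂, hb₂⟩ heq
    rcases hchain.total hs₁ hs₂ with h | h
    · exact hc hs₂ a₁ ha₁ b₁ (h hb₁) a₂ ha₂ b₂ hb₂ heq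
    · exact hc hs₁ a₁ ha₁ b₁ hb₁ a₂ ha₂ b₂ (h hb₂) heq
  obtain ⟨M, hM⟩ := zorn_subset {B : Set G | IsDirectProd A B} hchains
  exact ⟨M, hM.1, fun B' hsub hd => subset_antisymm (hM.2 hd hsub) hsub⟩

private lemma exists_left_subfactor {G : Type*} [Group G] (A : Set G) :
    ∃ B : Set G, IsLeftSubfactor A B := by
  have hchains : ∀ c ⊆ {B : Set G | IsDirectProd B A}, IsChain (· ⊆ ·) c →
      ∃ ub ∈ {B : Set G | IsDirectProd B A}, ∀ s ∈ c, s ⊆ ub := by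
    intro c hc hchain
    refine ⟨⋃₀ c, ?_, fun s hs => Set.subset_sUnion_of_mem hs⟩
    rintro b₁ ⟨s₁, hs₁, hb₁⟩ a₁ ha₁ b₂ ⟨s₂, hs₂, hb₂⟩ a₂ ha₂ heq
    rcases hchain.total hs₁ hs₂ with h | h
    · exact hc hs₂ b₁ (h hb₁) a₁ ha₁ b₂ hb₂ a₂ ha₂ heq
    · exact hc hs₁ b₁ hb₁ a₁ ha₁ b₂ (h hb₂) a₂ ha₂ heq
  obtain ⟨M, hM⟩ := zorn_subset {B : Set G | IsDirectProd B A} hchains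
  exact ⟨M, hM.1, fun B' hsub hd => subset_antisymm (hM.2 hd hsub) hsub⟩

private lemma right_card {G : Type*} [Group G] [Infinite G] {A B : Set G} (hA : A.Nonempty)
    (h : IsRightSubfactor A B) : Cardinal.mk ↥A * Cardinal.mk ↥B = Cardinal.mk G := by
  obtain ⟨hd, hmax⟩ := h
  have hAne : Nonempty ↥A := hA.to_subtype
  have h1 : Cardinal.mk ↥A * Cardinal.mk ↥B ≤ Cardinal.mk G := by
    have hinj : Function.Injective (fun p : ↥A × ↥B => (p.1 : G) * p.2) := by
      rintro ⟨⟨a₁, ha₁⟩, ⟨b₁, hb₁⟩⟩ ⟨⟨a₂, ha₂⟩, ⟨b₂, hb₂⟩⟩ heq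
      obtain ⟨e1, e2⟩ := hd a₁ ha₁ b₁ hb₁ a₂ ha₂ b₂ hb₂ heq
      simp [Prod.ext_iff, Subtype.ext_iff, e1, e2]
    have := Cardinal.mk_le_of_injective hinj
    simpa using this
  have hsur : ∀ g : G, ∃ a ∈ A, ∃ a' ∈ A, ∃ b ∈ B, g = a⁻¹ * a' * b := by
    intro g
    by_contra hg
    push_neg at hg
    have hd' : IsDirectProd A (insert g B) := by
      rintro a₁ ha₁ b₁ hb₁ a₂ ha₂ b₂ hb₂ heq
      rcases hb₁ with rfl | hb₁ <;> rcases hb₂ with rfl | hb₂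
      · exact ⟨mul_right_cancel heq, rfl⟩
      · exact absurd (by rw [mul_assoc, ← heq]; group) (hg a₁ ha₁ a₂ ha₂ b₂ hb₂)
      · exact absurd (by rw [mul_assoc, heq]; group) (hg a₂ ha₂ a₁ ha₁ b₁ hb₁)
      · exact hd a₁ ha₁ b₁ hb₁ a₂ ha₂ b₂ hb₂ heq
    have hBeq := hmax _ (Set.subset_insert g B) hd'
    have hgB : g ∈ B := hBeq ▸ Set.mem_insert g B
    obtain ⟨a, ha⟩ := hA
    exact hg a ha a ha g hgB (by group)
  have h2 : Cardinal.mk G ≤ Cardinal.mk ↥A * Cardinal.mk ↥A * Cardinal.mk ↥B := by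
    have hS : Function.Surjective
        (fun p : (↥A × ↥A) × ↥B => ((p.1.1 : G))⁻¹ * p.1.2 * p.2.1) := by
      intro g
      obtain ⟨a, ha, a', ha', b, hb, hgeq⟩ := hsur g
      exact ⟨⟨⟨⟨a, ha⟩, ⟨a', ha'⟩⟩, ⟨b, hb⟩⟩, hgeq.symm⟩
    have := Cardinal.mk_le_of_surjective hS
    simpa using this
  exact card_aux (Cardinal.mk_ne_zero ↥A) (Cardinal.infinite_iff.mp ‹Infinite G›) h1 h2

private lemma left_card {G : Type*} [Group G] [Infinite G] {A B : Set G} (hA : A.Nonempty)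
    (h : IsLeftSubfactor A B) : Cardinal.mk ↥A * Cardinal.mk ↥B = Cardinal.mk G := by
  obtain ⟨hd, hmax⟩ := h
  have hAne : Nonempty ↥A := hA.to_subtype
  have h1 : Cardinal.mk ↥A * Cardinal.mk ↥B ≤ Cardinal.mk G := by
    have hinj : Function.Injective (fun p : ↥A × ↥B => (p.2 : G) * p.1) := by
      rintro ⟨⟨a₁, ha₁⟩, ⟨b₁, hb₁⟩⟩ ⟨⟨a₂, ha₂⟩, ⟨b₂, hb₂⟩⟩ heq
      obtain ⟨e1, e2⟩ := hd b₁ hb₁ a₁ ha₁ b₂ hb₂ a₂ ha₂ heq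
      simp [Prod.ext_iff, Subtype.ext_iff, e1, e2]
    have := Cardinal.mk_le_of_injective hinj
    simpa using this
  have hsur : ∀ g : G, ∃ b ∈ B, ∃ a ∈ A, ∃ a' ∈ A, g = b * a * a'⁻¹ := by
    intro g
    by_contra hg
    push_neg at hg
    have hd' : IsDirectProd (insert g B) A := by
      rintro b₁ hb₁ a₁ ha₁ b₂ hb₂ a₂ ha₂ heq
      rcases hb₁ with rfl | hb₁ <;> rcases hb₂ with rfl | hb₂
      · exact ⟨rfl, mul_left_cancel heq⟩
      · exact absurd (by rw [← heq]; group) (hg b₂ hb₂ a₂ ha₂ a₁ ha₁)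
      · exact absurd (by rw [heq]; group) (hg b₁ hb₁ a₁ ha₁ a₂ ha₂)
      · exact hd b₁ hb₁ a₁ ha₁ b₂ hb₂ a₂ ha₂ heq
    have hBeq := hmax _ (Set.subset_insert g B) hd'
    have hgB : g ∈ B := hBeq ▸ Set.mem_insert g B
    obtain ⟨a, ha⟩ := hA
    exact hg g hgB a ha a ha (by group)
  have h2 : Cardinal.mk G ≤ Cardinal.mk ↥A * Cardinal.mk ↥A * Cardinal.mk ↥B := by
    have hS : Function.Surjective
        (fun p : (↥A × ↥A) × ↥B => (p.2.1 : G) * p.1.1 * (p.1.2 : G)⁻¹) := by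
      intro g
      obtain ⟨b, hb, a, ha, a', ha', hgeq⟩ := hsur g
      exact ⟨⟨⟨⟨a, ha⟩, ⟨a', ha'⟩⟩, ⟨b, hb⟩⟩, hgeq.symm⟩
    have := Cardinal.mk_le_of_surjective hS
    simpa using this
  exact card_aux (Cardinal.mk_ne_zero ↥A) (Cardinal.infinite_iff.mp ‹Infinite G›) h1 h2

theorem stmt6 {G : Type*} [Group G] [Infinite G] (A : Set G) (hA : A.Nonempty) :
    (∀ B : Set G, IsRightSubfactor A B → Cardinal.mk ↥A * Cardinal.mk ↥B = Cardinal.mk G) ∧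
    (∀ B : Set G, IsLeftSubfactor A B → Cardinal.mk ↥A * Cardinal.mk ↥B = Cardinal.mk G) ∧
    Cardinal.mk G = rLowerIndex A * Cardinal.mk ↥A ∧
    Cardinal.mk G = rUpperIndex A * Cardinal.mk ↥A ∧
    Cardinal.mk G = lLowerIndex A * Cardinal.mk ↥A ∧
    Cardinal.mk G = lUpperIndex A * Cardinal.mk ↥A := by
  have hGinf : Cardinal.aleph0 ≤ Cardinal.mk G := Cardinal.infinite_iff.mp ‹Infinite G›
  have hA1 : (1 : Cardinal) ≤ Cardinal.mk ↥A :=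
    Cardinal.one_le_iff_ne_zero.mpr (Cardinal.mk_ne_zero_iff.mpr hA.to_subtype)
  have hAle : Cardinal.mk ↥A ≤ Cardinal.mk G := Cardinal.mk_set_le A
  -- membership facts
  have memR : ∀ c ∈ {c | ∃ B : Set G, IsRightSubfactor A B ∧ c = Cardinal.mk ↥B},
      c * Cardinal.mk ↥A = Cardinal.mk G := by
    rintro c ⟨B, hB, rfl⟩
    rw [mul_comm]; exact right_card hA hB
  have memL : ∀ c ∈ {c | ∃ B : Set G, IsLeftSubfactor A B ∧ c = Cardinal.mk ↥B},
      c * Cardinal.mk ↥A = Cardinal.mk G := by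
    rintro c ⟨B, hB, rfl⟩
    rw [mul_comm]; exact left_card hA hB
  have hRne : {c | ∃ B : Set G, IsRightSubfactor A B ∧ c = Cardinal.mk ↥B}.Nonempty := by
    obtain ⟨B, hB⟩ := exists_right_subfactor A
    exact ⟨Cardinal.mk ↥B, B, hB, rfl⟩
  have hLne : {c | ∃ B : Set G, IsLeftSubfactor A B ∧ c = Cardinal.mk ↥B}.Nonempty := by
    obtain ⟨B, hB⟩ := exists_left_subfactor A
    exact ⟨Cardinal.mk ↥B, B, hB, rfl⟩
  have hmemle : ∀ (S : Set Cardinal),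
      (∀ c ∈ S, c * Cardinal.mk ↥A = Cardinal.mk G) → ∀ c ∈ S, c ≤ Cardinal.mk G := by
    intro S hS c hc
    calc c = c * 1 := (mul_one c).symm
    _ ≤ c * Cardinal.mk ↥A := by gcongr
    _ = Cardinal.mk G := hS c hc
  have hsup : ∀ (S : Set Cardinal), S.Nonempty →
      (∀ c ∈ S, c * Cardinal.mk ↥A = Cardinal.mk G) →
      Cardinal.mk G = sSup S * Cardinal.mk ↥A := by
    intro S hne hS
    obtain ⟨c₀, hc₀⟩ := hne
    have hbdd : BddAbove S := ⟨Cardinal.mk G, fun c hc => hmemle S hS c hc⟩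
    refine le_antisymm ?_ ?_
    · calc Cardinal.mk G = c₀ * Cardinal.mk ↥A := (hS c₀ hc₀).symm
      _ ≤ sSup S * Cardinal.mk ↥A := by gcongr; exact le_csSup hbdd hc₀
    · calc sSup S * Cardinal.mk ↥A ≤ Cardinal.mk G * Cardinal.mk G :=
            mul_le_mul' (csSup_le ⟨c₀, hc₀⟩ (fun c hc => hmemle S hS c hc)) hAle
      _ = Cardinal.mk G := Cardinal.mul_eq_self hGinf
  refine ⟨fun B hB => right_card hA hB, fun B hB => left_card hA hB, ?_, ?_, ?_, ?_⟩
  · exact (memR _ (csInf_mem hRne)).symm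
  · exact hsup _ hRne memR
  · exact (memL _ (csInf_mem hLne)).symm
  · exact hsup _ hLne memL
end

section
/- An infinite group G contains a right index stable subset with right index 2 (i.e., a subset A such that every right subfactor of G relative to A has exactly 2 elements) if and only if G contains an element x ≠ 1 whose order is not 3. -/
open Pointwise

open Cardinal Set

section Construction
set_option linter.unusedSectionVars false
variable {G : Type u} [Group G]

def Good (x : G) (U : Set G) : Prop := ∀ a ∈ U, ∀ b ∈ U, a⁻¹ * b ≠ x

def forb (x g : G) (U : Set G) : Set G :=
  (· * x⁻¹) '' U ∪ (· * x) '' U ∪ (· * (x⁻¹ * g⁻¹)) '' U ∪ (· * (x * g⁻¹)) '' U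

open scoped Classical in
noncomputable def step (x g : G) (U : Set G) : Set G :=
  if h : (g ≠ x ∧ g ≠ x⁻¹) ∧ ((forb x g U)ᶜ).Nonempty then
    {h.2.choose, h.2.choose * g} else ∅

lemma forb_card [Infinite G] {x g : G} {U : Set G} (hU : #U < #G) : #(forb x g U) < #G := by
  have h0 : ℵ₀ ≤ #G := Cardinal.infinite_iff.mp inferInstance
  have him : ∀ c : G, #((· * c) '' U) < #G := fun c => (mk_image_le).trans_lt hU
  have h1 : #((· * x⁻¹) '' U ∪ (· * x) '' U : Set G) < #G :=
    (mk_union_le _ _).trans_lt (Cardinal.add_lt_of_lt h0 (him _) (him _))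
  have h2 : #((· * x⁻¹) '' U ∪ (· * x) '' U ∪ (· * (x⁻¹ * g⁻¹)) '' U : Set G) < #G :=
    (mk_union_le _ _).trans_lt (Cardinal.add_lt_of_lt h0 h1 (him _))
  exact (mk_union_le _ _).trans_lt (Cardinal.add_lt_of_lt h0 h2 (him _))

lemma compl_nonempty {s : Set G} (h : #s < #G) : sᶜ.Nonempty := by
  by_contra hc
  rw [Set.not_nonempty_iff_eq_empty, compl_empty_iff] at hc
  rw [hc, mk_univ] at h
  exact lt_irrefl _ h

lemma step_card (x g : G) (U : Set G) : #(step x g U) ≤ 2 := by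
  rw [step]
  split_ifs with h
  · refine (Cardinal.mk_insert_le).trans ?_
    rw [mk_singleton]
    norm_num
  · simp


noncomputable def enumG (G : Type u) [Group G] : (#G).ord.ToType ≃ G :=
  (Cardinal.eq.mp (Cardinal.mk_ord_toType #G)).some

noncomputable def pairs (x : G) : (#G).ord.ToType → Set G :=
  (IsWellFounded.wf (r := ((· < ·) : (#G).ord.ToType → _ → Prop))).fix
    (fun i rec => step x (enumG G i) (⋃ j : {j // j < i}, rec j.1 j.2))

noncomputable def upto (x : G) (i : (#G).ord.ToType) : Set G :=
  ⋃ j : {j // j < i}, pairs x j.1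

lemma pairs_eq (x : G) (i) : pairs x i = step x (enumG G i) (upto x i) := by
  rw [pairs, WellFounded.fix_eq]
  rfl

lemma upto_card [Infinite G] (x : G) (i) : #(upto x i) < #G := by
  have h0 : ℵ₀ ≤ #G := Cardinal.infinite_iff.mp inferInstance
  haveI : IsWellOrder (#G).ord.ToType (· < ·) := isWellOrder_lt
  have hlt : #{j : (#G).ord.ToType // j < i} < #G := by
    have h1 := Cardinal.card_typein_toType_lt (#G) i
    have h2 : #{j : (#G).ord.ToType // j < i} =
        (Ordinal.typein ((· < ·) : (#G).ord.ToType → (#G).ord.ToType → Prop) i).card :=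
      Ordinal.card_typein i
    rwa [h2]
  have hsup : (⨆ j : {j : (#G).ord.ToType // j < i}, #(pairs x j.1)) ≤ 2 :=
    ciSup_le' fun j => (pairs_eq x j.1) ▸ step_card _ _ _
  calc #(upto x i) ≤ _ := Cardinal.mk_iUnion_le _
    _ ≤ #{j : (#G).ord.ToType // j < i} * 2 := mul_le_mul_right hsup _
    _ < #G := Cardinal.mul_lt_of_lt h0 hlt
        (lt_of_lt_of_le (by exact_mod_cast Cardinal.nat_lt_aleph0 2 : (2:Cardinal) < ℵ₀) h0)

lemma pairs_subset (x : G) {j i : (#G).ord.ToType} (h : j ≤ i) :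
    pairs x j ⊆ upto x i ∪ pairs x i := by
  rcases lt_or_eq_of_le h with h | rfl
  · exact fun g hg => Or.inl (Set.mem_iUnion.mpr ⟨⟨j, h⟩, hg⟩)
  · exact fun g hg => Or.inr hg

lemma step_good {x : G} (hx : x ≠ 1) {g : G} {U : Set G} (hU : Good x U) :
    Good x (U ∪ step x g U) := by
  rw [step]
  split_ifs with h
  · obtain ⟨⟨hgx, hgx'⟩, hne⟩ := h
    set a := hne.choose with ha
    have haf : a ∉ forb x g U := hne.choose_spec
    rintro u (hu | hu) v (hv | hv)
    · exact hU u hu v hv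
    · -- u ∈ U, v ∈ {a, a*g}
      rcases hv with rfl | rfl
      · intro hc
        exact haf (Or.inl (Or.inl (Or.inr ⟨u, hu, by rw [← hc]; group⟩)))
      · intro hc
        exact haf (Or.inr ⟨u, hu, by rw [← hc]; group⟩)
    · rcases hu with rfl | rfl
      · intro hc
        exact haf (Or.inl (Or.inl (Or.inl ⟨v, hv, by rw [← hc]; group⟩)))
      · intro hc
        exact haf (Or.inl (Or.inr ⟨v, hv, by rw [← hc]; group⟩))
    · rcases hu with rfl | rfl <;> rcases hv with rfl | rfl
      · intro hc; apply hx; rw [← hc]; group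
      · intro hc
        exact hgx (by rwa [inv_mul_cancel_left] at hc)
      · intro hc
        apply hgx'
        have : g⁻¹ = x := by rwa [mul_inv_rev, inv_mul_cancel_right] at hc
        rw [← this, inv_inv]
      · intro hc; apply hx; rw [← hc]; group
  · simpa using hU


lemma good_upto_pairs {x : G} (hx : x ≠ 1) :
    ∀ i, Good x (upto x i ∪ pairs x i) := by
  intro i
  refine (IsWellFounded.wf (r := ((· < ·) : (#G).ord.ToType → _ → Prop))).induction
    (C := fun i => Good x (upto x i ∪ pairs x i)) i ?_
  intro i IH
  have hgU : Good x (upto x i) := by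
    intro u hu v hv
    obtain ⟨⟨j₁, hj₁⟩, hu⟩ := Set.mem_iUnion.mp hu
    obtain ⟨⟨j₂, hj₂⟩, hv⟩ := Set.mem_iUnion.mp hv
    rcases le_total j₁ j₂ with h | h
    · exact IH j₂ hj₂ u (pairs_subset x h hu) v (pairs_subset x le_rfl hv)
    · exact IH j₁ hj₁ u (pairs_subset x le_rfl hu) v (pairs_subset x h hv)
  rw [pairs_eq]
  exact step_good hx hgU

noncomputable def Atot (x : G) : Set G := ⋃ i, pairs x i

lemma step_cover [Infinite G] {x g : G} {U : Set G} (hU : #U < #G) (h1 : g ≠ x) (h2 : g ≠ x⁻¹) :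
    ∃ a ∈ step x g U, ∃ b ∈ step x g U, a⁻¹ * b = g := by
  have hne : ((forb x g U)ᶜ).Nonempty := compl_nonempty (forb_card hU)
  rw [step]
  rw [dif_pos ⟨⟨h1, h2⟩, hne⟩]
  exact ⟨_, Or.inl rfl, _, Or.inr rfl, inv_mul_cancel_left _ _⟩


lemma Atot_good {x : G} (hx : x ≠ 1) : Good x (Atot x) := by
  intro u hu v hv
  obtain ⟨j₁, hu⟩ := Set.mem_iUnion.mp hu
  obtain ⟨j₂, hv⟩ := Set.mem_iUnion.mp hv
  rcases le_total j₁ j₂ with h | h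
  · exact good_upto_pairs hx j₂ u (pairs_subset x h hu) v (pairs_subset x le_rfl hv)
  · exact good_upto_pairs hx j₁ u (pairs_subset x le_rfl hu) v (pairs_subset x h hv)

lemma Atot_cover [Infinite G] {x : G} (g : G) (h1 : g ≠ x) (h2 : g ≠ x⁻¹) :
    ∃ a ∈ Atot x, ∃ b ∈ Atot x, a⁻¹ * b = g := by
  set i := (enumG G).symm g with hi
  have he : enumG G i = g := (enumG G).apply_symm_apply g
  obtain ⟨a, ha, b, hb, hab⟩ := step_cover (x := x) (g := enumG G i) (upto_card x i)
    (by rw [he]; exact h1) (by rw [he]; exact h2)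
  rw [← pairs_eq] at ha hb
  exact ⟨a, Set.mem_iUnion.mpr ⟨i, ha⟩, b, Set.mem_iUnion.mpr ⟨i, hb⟩, hab.trans he⟩

lemma exists_A (G : Type u) [Group G] [Infinite G] {x : G} (hx : x ≠ 1) :
    ∃ A : Set G, (∀ a ∈ A, ∀ b ∈ A, a⁻¹ * b ≠ x) ∧
      ∀ g : G, g ≠ x → g ≠ x⁻¹ → ∃ a ∈ A, ∃ b ∈ A, a⁻¹ * b = g :=
  ⟨Atot x, Atot_good hx, fun g h1 h2 => Atot_cover g h1 h2⟩

end Construction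

lemma direct_of_ratio {G : Type*} [Group G] {A B : Set G}
    (h : ∀ b₁ ∈ B, ∀ b₂ ∈ B, b₁ ≠ b₂ → ∀ a ∈ A, ∀ a' ∈ A, a⁻¹ * a' ≠ b₁ * b₂⁻¹) :
    IsDirectProd A B := by
  intro a₁ ha₁ b₁ hb₁ a₂ ha₂ b₂ hb₂ heq
  by_cases hbb : b₁ = b₂
  · subst hbb
    exact ⟨mul_right_cancel heq, rfl⟩
  · exfalso
    refine h b₂ hb₂ b₁ hb₁ (Ne.symm hbb) a₂ ha₂ a₁ ha₁ ?_
    rw [show b₂ = a₂⁻¹ * (a₁ * b₁) from by rw [heq]; group]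
    group

lemma exists_subfactor {G : Type*} [Group G] {A B₀ : Set G} (h : IsDirectProd A B₀) :
    ∃ M, B₀ ⊆ M ∧ IsRightSubfactor A M := by
  have hz : ∀ c ⊆ {B : Set G | IsDirectProd A B}, IsChain (· ⊆ ·) c → c.Nonempty →
      ∃ ub ∈ {B : Set G | IsDirectProd A B}, ∀ s ∈ c, s ⊆ ub := by
    intro c hc hchain hne
    refine ⟨⋃₀ c, ?_, fun s hs => Set.subset_sUnion_of_mem hs⟩
    intro a₁ ha₁ b₁ hb₁ a₂ ha₂ b₂ hb₂ heq
    obtain ⟨s₁, hs₁, hb₁⟩ := hb₁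
    obtain ⟨s₂, hs₂, hb₂⟩ := hb₂
    rcases hchain.total hs₁ hs₂ with h' | h'
    · exact hc hs₂ a₁ ha₁ b₁ (h' hb₁) a₂ ha₂ b₂ hb₂ heq
    · exact hc hs₁ a₁ ha₁ b₁ hb₁ a₂ ha₂ b₂ (h' hb₂) heq
  obtain ⟨M, hM, hmax⟩ := zorn_subset_nonempty {B : Set G | IsDirectProd A B} hz B₀ h
  exact ⟨M, hM, hmax.1, fun B' hsub hdir => subset_antisymm (hmax.2 hdir hsub) hsub⟩

theorem stmt9 {G : Type*} [Group G] [Infinite G] :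
    (∃ A : Set G, ∀ B : Set G, IsRightSubfactor A B → Cardinal.mk ↥B = 2) ↔
    ∃ x : G, x ≠ 1 ∧ orderOf x ≠ 3 := by
  constructor
  · rintro ⟨A, hA⟩
    by_contra hcon
    push_neg at hcon
    by_cases hcase : ∀ t : G, t ≠ 1 → ∃ a ∈ A, ∃ b ∈ A, a⁻¹ * b = t
    · -- {1} is a subfactor of cardinality 1
      have hsf : IsRightSubfactor A {1} := by
        constructor
        · refine direct_of_ratio ?_
          intro b₁ hb₁ b₂ hb₂ hne
          rw [Set.mem_singleton_iff] at hb₁ hb₂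
          exact absurd (hb₁.trans hb₂.symm) hne
        · intro B' hsub hdir
          refine subset_antisymm ?_ hsub
          intro y hy
          rw [Set.mem_singleton_iff]
          by_contra hy1
          obtain ⟨a, ha, a', ha', heq⟩ := hcase y hy1
          have h1B : (1 : G) ∈ B' := hsub rfl
          have : a * y = a' * 1 := by rw [show a' = a * y from by rw [← heq]; group]; group
          exact hy1 (hdir a ha y hy a' ha' 1 h1B this).2
      have h1 := hA {1} hsf
      rw [Cardinal.mk_singleton] at h1
      norm_num at h1
    · push_neg at hcase
      obtain ⟨t, ht1, hT⟩ := hcase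
      have h3 : t ^ 3 = 1 := by rw [← hcon t ht1]; exact pow_orderOf_eq_one t
      have ht2 : t ^ 2 ≠ 1 := by
        intro h
        have hdvd := orderOf_dvd_of_pow_eq_one h
        rw [hcon t ht1] at hdvd
        exact absurd hdvd (by norm_num)
      have htt : t ^ 2 ≠ t := by
        intro h
        apply ht1
        have := mul_right_cancel (a := t) (b := t) (c := 1) ?_
        · exact this
        · rw [one_mul, ← pow_two, h]
      have hinv1 : t⁻¹ = t ^ 2 := by
        apply inv_eq_of_mul_eq_one_right
        rw [← pow_succ']
        exact h3
      have hinv2 : (t ^ 2)⁻¹ = t := by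
        apply inv_eq_of_mul_eq_one_right
        rw [← pow_succ]
        exact h3
      have hT2 : ∀ a ∈ A, ∀ b ∈ A, a⁻¹ * b ≠ t ^ 2 := by
        intro a ha b hb h
        apply hT b hb a ha
        rw [show t = (t ^ 2)⁻¹ from hinv2.symm, ← h]
        group
      -- {1, t, t^2} is direct with A
      have hdir : IsDirectProd A {1, t, t ^ 2} := by
        refine direct_of_ratio ?_
        intro b₁ hb₁ b₂ hb₂ hne a ha a' ha'
        have key : b₁ * b₂⁻¹ = t ∨ b₁ * b₂⁻¹ = t ^ 2 := by
          simp only [Set.mem_insert_iff, Set.mem_singleton_iff] at hb₁ hb₂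
          rcases hb₁ with h1 | h1 | h1 <;> rcases hb₂ with h2 | h2 | h2 <;>
            rw [h1, h2] at hne ⊢
          · exact absurd rfl hne
          · right; rw [one_mul, hinv1]
          · left; rw [one_mul, hinv2]
          · left; rw [inv_one, mul_one]
          · exact absurd rfl hne
          · right; rw [hinv2, ← pow_two]
          · right; rw [inv_one, mul_one]
          · left; rw [hinv1, show t ^ 2 * t ^ 2 = t ^ 3 * t from by group, h3, one_mul]
          · exact absurd rfl hne
        rcases key with h | h
        · rw [h]; exact hT a ha a' ha'
        · rw [h]; exact hT2 a ha a' ha'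
      obtain ⟨M, hM, hsf⟩ := exists_subfactor hdir
      have hcard := hA M hsf
      have hle : #({1, t, t ^ 2} : Set G) ≤ #M := Cardinal.mk_le_mk_of_subset hM
      have h1nt : (1 : G) ∉ ({t, t ^ 2} : Set G) := by
        simp only [Set.mem_insert_iff, Set.mem_singleton_iff]
        push_neg
        exact ⟨fun h => ht1 h.symm, fun h => ht2 h.symm⟩
      have htnt : t ∉ ({t ^ 2} : Set G) := by simpa using fun h => htt h.symm
      rw [Cardinal.mk_insert h1nt, Cardinal.mk_insert htnt, Cardinal.mk_singleton] at hle
      rw [hcard] at hle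
      norm_num at hle
  · rintro ⟨x, hx1, hx3'⟩
    have hx3 : x ^ 3 ≠ 1 := by
      intro h
      rcases (Nat.prime_three).eq_one_or_self_of_dvd _ (orderOf_dvd_of_pow_eq_one h) with h' | h'
      · exact hx1 (orderOf_eq_one_iff.mp h')
      · exact hx3' h'
    obtain ⟨A, Agood, Acover⟩ := exists_A G hx1
    have Agood' : ∀ a ∈ A, ∀ b ∈ A, a⁻¹ * b ≠ x⁻¹ := by
      intro a ha b hb h
      apply Agood b hb a ha
      rw [show x = (a⁻¹ * b)⁻¹ from by rw [h]; group]
      group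
    refine ⟨A, ?_⟩
    rintro B ⟨hdir, hmax⟩
    have ratio : ∀ b₁ ∈ B, ∀ b₂ ∈ B, b₁ ≠ b₂ → b₁ * b₂⁻¹ = x ∨ b₁ * b₂⁻¹ = x⁻¹ := by
      intro b₁ h1 b₂ h2 hne
      by_contra hcc
      push_neg at hcc
      obtain ⟨a, ha, a', ha', heq⟩ := Acover (b₁ * b₂⁻¹) hcc.1 hcc.2
      have heq2 : a * b₁ = a' * b₂ := by
        rw [show a' = a * (b₁ * b₂⁻¹) from by rw [← heq]; group]
        group
      exact hne (hdir a ha b₁ h1 a' ha' b₂ h2 heq2).2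
    have hBne : B.Nonempty := by
      rcases Set.eq_empty_or_nonempty B with rfl | h
      · have h1 : IsDirectProd A {1} := by
          refine direct_of_ratio ?_
          intro b₁ hb₁ b₂ hb₂ hne
          rw [Set.mem_singleton_iff] at hb₁ hb₂
          exact absurd (hb₁.trans hb₂.symm) hne
        have := hmax {1} (Set.empty_subset _) h1
        simp at this
      · exact h
    obtain ⟨b, hb⟩ := hBne
    have hBtwo : ∃ c ∈ B, c ≠ b := by
      by_contra hcc
      push_neg at hcc
      have hdir' : IsDirectProd A (insert (x * b) B) := by
        refine direct_of_ratio ?_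
        intro b₁ hb₁ b₂ hb₂ hne a ha a' ha'
        rcases hb₁ with rfl | hb₁ <;> rcases hb₂ with rfl | hb₂
        · exact absurd rfl hne
        · rw [hcc b₂ hb₂, show x * b * b⁻¹ = x from by group]
          exact Agood a ha a' ha'
        · rw [hcc b₁ hb₁, show b * (x * b)⁻¹ = x⁻¹ from by group]
          exact Agood' a ha a' ha'
        · rw [hcc b₁ hb₁, hcc b₂ hb₂] at hne
          exact absurd rfl hne
      have heqB := hmax _ (Set.subset_insert _ _) hdir'
      have hxb : x * b ∈ B := heqB ▸ Set.mem_insert _ _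
      have := hcc _ hxb
      apply hx1
      have := mul_right_cancel (b := b) (a := x) (c := 1) (by rw [one_mul]; exact this)
      exact this
    obtain ⟨c, hc, hcb⟩ := hBtwo
    have hsub : B ⊆ {c, b} := by
      intro d hd
      simp only [Set.mem_insert_iff, Set.mem_singleton_iff]
      by_contra hdcb
      push_neg at hdcb
      have key : (d * c⁻¹) * (c * b⁻¹) = d * b⁻¹ := by group
      have hxx : x * x ≠ x := fun h => hx1 (mul_right_cancel (b := x) (c := 1) (by rwa [one_mul]))
      have hxxi : x * x ≠ x⁻¹ := by
        intro h
        apply hx3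
        rw [pow_succ, pow_two, h]
        group
      have hixi : x⁻¹ * x⁻¹ ≠ x⁻¹ := fun h => hx1 (by
        have := mul_right_cancel (b := x⁻¹) (a := x⁻¹) (c := 1) (by rwa [one_mul])
        rw [← inv_inv x, this, inv_one])
      have hixx : x⁻¹ * x⁻¹ ≠ x := fun h =>
        hxxi (by simpa using congrArg (fun z : G => z⁻¹) h)
      have h1x : (1 : G) ≠ x := fun h => hx1 h.symm
      have h1xi : (1 : G) ≠ x⁻¹ := fun h => hx1 (by rw [← inv_inv x, ← h, inv_one])
      rcases ratio d hd c hc hdcb.1 with r2 | r2 <;>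
        rcases ratio c hc b hb hcb with r1 | r1 <;>
          rcases ratio d hd b hb hdcb.2 with r3 | r3 <;>
            rw [r2, r1, r3] at key
      · exact hxx key
      · exact hxxi key
      · exact h1x (by rw [← key]; group)
      · exact h1xi (by rw [← key]; group)
      · exact h1x (by rw [← key]; group)
      · exact h1xi (by rw [← key]; group)
      · exact hixx key
      · exact hixi key
    have hBeq : B = {c, b} :=
      subset_antisymm hsub (Set.insert_subset hc (Set.singleton_subset_iff.mpr hb))
    rw [hBeq, Cardinal.mk_insert (by simpa using hcb), Cardinal.mk_singleton]
    exact one_add_one_eq_two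
end
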